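/- Let t ≥ 1 and K ≥ 1 be integers, I ⊆ [K] an index set with |I| ≥ 1, and let x, y ∈ (0,1]^K, c ∈ ℝ, and ℓ ∈ [0,∞)^K with ℓ_i = 0 for all i ∈ [K] except possibly one index. Suppose ∑_{i∈I} x_i = ∑_{i∈I} y_i and, for every i ∈ I, 3·K^{1/6}·√(t+1)·y_i^{−1/3} = 3·K^{1/6}·√t·x_i^{−1/3} + ℓ_i − c. Then ∑_{i∈I} y_i^{4/3} ≤ 2·(1 + 1/t)²·∑_{i∈I} x_i^{4/3} ≤ 8·∑_{i∈I} x_i^{4/3}. -/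

import Mathlib

lemma gmr_superadd {a b : ℝ} (ha : 0 ≤ a) (hb : 0 ≤ b) :
    a ^ ((4:ℝ)/3) + b ^ ((4:ℝ)/3) ≤ (a + b) ^ ((4:ℝ)/3) := by
  have h := NNReal.add_rpow_le_rpow_add (a.toNNReal) (b.toNNReal)
    (by norm_num : (1:ℝ) ≤ 4/3)
  have h2 := NNReal.coe_le_coe.2 h
  push_cast at h2
  rwa [Real.coe_toNNReal a ha, Real.coe_toNNReal b hb] at h2

lemma gmr_sub13 {a b : ℝ} (ha : 0 ≤ a) (hb : 0 ≤ b) :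
    (a + b) ^ ((1:ℝ)/3) ≤ a ^ ((1:ℝ)/3) + b ^ ((1:ℝ)/3) := by
  have h := NNReal.rpow_add_le_add_rpow (a.toNNReal) (b.toNNReal)
    (by norm_num : (0:ℝ) ≤ 1/3) (by norm_num : (1:ℝ)/3 ≤ 1)
  have h2 := NNReal.coe_le_coe.2 h
  push_cast at h2
  rwa [Real.coe_toNNReal a ha, Real.coe_toNNReal b hb] at h2

lemma gmr_two_mul {a b : ℝ} (ha : 0 ≤ a) (hb : 0 ≤ b) :
    (a + b) ^ ((4:ℝ)/3) ≤ 2 * (a ^ ((4:ℝ)/3) + b ^ ((4:ℝ)/3)) := by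
  have hab : 0 ≤ a + b := add_nonneg ha hb
  have hsplit : ∀ u : ℝ, 0 ≤ u → u ^ ((4:ℝ)/3) = u * u ^ ((1:ℝ)/3) := by
    intro u hu
    rw [show (4:ℝ)/3 = 1 + 1/3 by norm_num, Real.rpow_add' hu (by norm_num),
      Real.rpow_one]
  have key : a * b ^ ((1:ℝ)/3) + b * a ^ ((1:ℝ)/3)
      ≤ a ^ ((4:ℝ)/3) + b ^ ((4:ℝ)/3) := by
    rcases le_total a b with hab' | hab'
    · have h13 : a ^ ((1:ℝ)/3) ≤ b ^ ((1:ℝ)/3) :=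
        Real.rpow_le_rpow ha hab' (by norm_num)
      nlinarith [Real.rpow_nonneg ha ((1:ℝ)/3), Real.rpow_nonneg hb ((1:ℝ)/3),
        hsplit a ha, hsplit b hb, sub_nonneg.2 hab', sub_nonneg.2 h13,
        mul_nonneg (sub_nonneg.2 hab') (sub_nonneg.2 h13)]
    · have h13 : b ^ ((1:ℝ)/3) ≤ a ^ ((1:ℝ)/3) :=
        Real.rpow_le_rpow hb hab' (by norm_num)
      nlinarith [Real.rpow_nonneg ha ((1:ℝ)/3), Real.rpow_nonneg hb ((1:ℝ)/3),
        hsplit a ha, hsplit b hb,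
        mul_nonneg (sub_nonneg.2 hab') (sub_nonneg.2 h13)]
  calc (a + b) ^ ((4:ℝ)/3) = (a + b) * (a + b) ^ ((1:ℝ)/3) := hsplit _ hab
    _ ≤ (a + b) * (a ^ ((1:ℝ)/3) + b ^ ((1:ℝ)/3)) := by
        apply mul_le_mul_of_nonneg_left (gmr_sub13 ha hb) hab
    _ = (a * a ^ ((1:ℝ)/3) + b * b ^ ((1:ℝ)/3))
        + (a * b ^ ((1:ℝ)/3) + b * a ^ ((1:ℝ)/3)) := by ring
    _ ≤ (a ^ ((4:ℝ)/3) + b ^ ((4:ℝ)/3)) + (a ^ ((4:ℝ)/3) + b ^ ((4:ℝ)/3)) := by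
        rw [← hsplit a ha, ← hsplit b hb]
        exact add_le_add le_rfl key
    _ = 2 * (a ^ ((4:ℝ)/3) + b ^ ((4:ℝ)/3)) := by ring

lemma gmr_star {a b : ℝ} (ha : 0 ≤ a) (hab : a ≤ b) :
    b ^ ((4:ℝ)/3) ≤ 2 * a ^ ((4:ℝ)/3) + 2 * (b - a) ^ ((4:ℝ)/3) := by
  have h := gmr_two_mul ha (sub_nonneg.2 hab)
  rw [add_sub_cancel] at h
  linarith

lemma gmr_sum_rpow {ι : Type*} {s : Finset ι} {f : ι → ℝ} (hf : ∀ i ∈ s, 0 ≤ f i) :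
    ∑ i ∈ s, (f i) ^ ((4:ℝ)/3) ≤ (∑ i ∈ s, f i) ^ ((4:ℝ)/3) := by
  induction s using Finset.cons_induction with
  | empty => simp
  | cons a s ha ih =>
    rw [Finset.sum_cons, Finset.sum_cons]
    have h1 : ∀ i ∈ s, 0 ≤ f i := fun i hi => hf i (Finset.mem_cons_of_mem hi)
    calc f a ^ ((4:ℝ)/3) + ∑ i ∈ s, (f i) ^ ((4:ℝ)/3)
        ≤ f a ^ ((4:ℝ)/3) + (∑ i ∈ s, f i) ^ ((4:ℝ)/3) := by
          linarith [ih h1]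
      _ ≤ (f a + ∑ i ∈ s, f i) ^ ((4:ℝ)/3) :=
          gmr_superadd (hf a (Finset.mem_cons_self a s)) (Finset.sum_nonneg h1)

lemma gmr_scale {β x y : ℝ} (hβ : 0 < β) (hx : 0 < x) (hy : 0 < y)
    (h : β * x ^ (-(1:ℝ)/3) ≤ y ^ (-(1:ℝ)/3)) :
    y ^ ((4:ℝ)/3) ≤ (1/β)^4 * x ^ ((4:ℝ)/3) := by
  have hx3 : 0 < x ^ ((1:ℝ)/3) := Real.rpow_pos_of_pos hx _
  have hy3 : 0 < y ^ ((1:ℝ)/3) := Real.rpow_pos_of_pos hy _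
  have hxneg : x ^ (-(1:ℝ)/3) = (x ^ ((1:ℝ)/3))⁻¹ := by
    rw [show -(1:ℝ)/3 = -(1/3) by norm_num, Real.rpow_neg hx.le]
  have hyneg : y ^ (-(1:ℝ)/3) = (y ^ ((1:ℝ)/3))⁻¹ := by
    rw [show -(1:ℝ)/3 = -(1/3) by norm_num, Real.rpow_neg hy.le]
  rw [hxneg, hyneg] at h
  have h' : y ^ ((1:ℝ)/3) ≤ (1/β) * x ^ ((1:ℝ)/3) := by
    have hd : β / x ^ ((1:ℝ)/3) ≤ 1 / y ^ ((1:ℝ)/3) := by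
      rw [div_eq_mul_inv, one_div (y ^ ((1:ℝ)/3))]; exact h
    have hm : β * y ^ ((1:ℝ)/3) ≤ 1 * x ^ ((1:ℝ)/3) := (div_le_div_iff₀ hx3 hy3).mp hd
    rw [div_mul_eq_mul_div, le_div_iff₀ hβ]
    nlinarith
  have h4 : (y ^ ((1:ℝ)/3))^4 ≤ ((1/β) * x ^ ((1:ℝ)/3))^4 :=
    pow_le_pow_left₀ hy3.le h' 4
  have hyy : (y ^ ((1:ℝ)/3))^4 = y ^ ((4:ℝ)/3) := by
    rw [← Real.rpow_natCast (y ^ ((1:ℝ)/3)) 4, ← Real.rpow_mul hy.le]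
    norm_num
  have hxx : (x ^ ((1:ℝ)/3))^4 = x ^ ((4:ℝ)/3) := by
    rw [← Real.rpow_natCast (x ^ ((1:ℝ)/3)) 4, ← Real.rpow_mul hx.le]
    norm_num
  calc y ^ ((4:ℝ)/3) = (y ^ ((1:ℝ)/3))^4 := hyy.symm
    _ ≤ ((1/β) * x ^ ((1:ℝ)/3))^4 := h4
    _ = (1/β)^4 * x ^ ((4:ℝ)/3) := by rw [mul_pow, hxx]

/-- Lemma D.1 (`group_multiplicative_relation`) for the 2/3-Tsallis entropy. -/
theorem group_multiplicative_relation
    (t K : ℕ) (ht : 1 ≤ t) (hK : 1 ≤ K)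
    (I : Finset (Fin K)) (hI : I.Nonempty)
    (x y : Fin K → ℝ)
    (hx : ∀ i, x i ∈ Set.Ioc (0 : ℝ) 1) (hy : ∀ i, y i ∈ Set.Ioc (0 : ℝ) 1)
    (c : ℝ) (ℓ : Fin K → ℝ) (hℓ : ∀ i, 0 ≤ ℓ i)
    (hsupp : ∃ i₀ : Fin K, ∀ i, i ≠ i₀ → ℓ i = 0)
    (hsum : ∑ i ∈ I, x i = ∑ i ∈ I, y i)
    (hkkt : ∀ i ∈ I,
      3 * (K : ℝ) ^ ((1 : ℝ) / 6) * Real.sqrt ((t : ℝ) + 1) * (y i) ^ (-(1 : ℝ) / 3)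
        = 3 * (K : ℝ) ^ ((1 : ℝ) / 6) * Real.sqrt (t : ℝ) * (x i) ^ (-(1 : ℝ) / 3)
          + ℓ i - c) :
    ∑ i ∈ I, (y i) ^ ((4 : ℝ) / 3)
        ≤ 2 * (1 + 1 / (t : ℝ)) ^ 2 * ∑ i ∈ I, (x i) ^ ((4 : ℝ) / 3) ∧
    2 * (1 + 1 / (t : ℝ)) ^ 2 * ∑ i ∈ I, (x i) ^ ((4 : ℝ) / 3)
        ≤ 8 * ∑ i ∈ I, (x i) ^ ((4 : ℝ) / 3) := by
  obtain ⟨i₀, hi₀⟩ := hsupp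
  have hxp : ∀ i, 0 < x i := fun i => (hx i).1
  have hyp : ∀ i, 0 < y i := fun i => (hy i).1
  have htp : (0:ℝ) < (t:ℝ) := by exact_mod_cast Nat.lt_of_lt_of_le Nat.zero_lt_one ht
  have hKp : (0:ℝ) < (K:ℝ) ^ ((1:ℝ)/6) :=
    Real.rpow_pos_of_pos (by exact_mod_cast Nat.lt_of_lt_of_le Nat.zero_lt_one hK) _
  have hst : (0:ℝ) < Real.sqrt (t:ℝ) := Real.sqrt_pos.2 htp
  have hst1 : (0:ℝ) < Real.sqrt ((t:ℝ)+1) := Real.sqrt_pos.2 (by linarith)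
  set γ0 : ℝ := 3 * (K : ℝ) ^ ((1 : ℝ) / 6) * Real.sqrt (t : ℝ) with hγ0
  set γ1 : ℝ := 3 * (K : ℝ) ^ ((1 : ℝ) / 6) * Real.sqrt ((t : ℝ) + 1) with hγ1
  have hγ0p : 0 < γ0 := by positivity
  have hγ1p : 0 < γ1 := by positivity
  have hγ01 : γ0 ≤ γ1 := by
    apply mul_le_mul_of_nonneg_left _ (by positivity)
    exact Real.sqrt_le_sqrt (by linarith)
  set β : ℝ := Real.sqrt (t:ℝ) / Real.sqrt ((t:ℝ)+1) with hβdef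
  have hβp : 0 < β := div_pos hst hst1
  have hβγ : γ0 = β * γ1 := by
    rw [hγ0, hγ1, hβdef]; field_simp
  have hβ4 : (1/β)^4 = (1 + 1/(t:ℝ))^2 := by
    have h2 : (1/β)^2 = ((t:ℝ)+1)/(t:ℝ) := by
      rw [hβdef, one_div, inv_div, div_pow, Real.sq_sqrt (by linarith : (0:ℝ) ≤ (t:ℝ)+1),
        Real.sq_sqrt htp.le]
    have : (1/β)^4 = ((1/β)^2)^2 := by ring
    rw [this, h2]
    field_simp
  have hSx : (0:ℝ) ≤ ∑ i ∈ I, (x i) ^ ((4:ℝ)/3) :=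
    Finset.sum_nonneg fun i _ => Real.rpow_nonneg (hxp i).le _
  have hfac : (1:ℝ) ≤ (1 + 1/(t:ℝ))^2 := by
    have : (0:ℝ) < 1/(t:ℝ) := by positivity
    nlinarith
  constructor
  · -- main inequality
    rcases le_or_gt c 0 with hc | hc
    · -- c ≤ 0 : coordinatewise bound
      have key : ∀ i ∈ I, (y i) ^ ((4:ℝ)/3) ≤ (1 + 1/(t:ℝ))^2 * (x i) ^ ((4:ℝ)/3) := by
        intro i hiI
        have hk := hkkt i hiI
        have h1 : β * (x i) ^ (-(1:ℝ)/3) ≤ (y i) ^ (-(1:ℝ)/3) := by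
          have hxnn : (0:ℝ) ≤ (x i) ^ (-(1:ℝ)/3) := (Real.rpow_pos_of_pos (hxp i) _).le
          have : γ0 * (x i) ^ (-(1:ℝ)/3) ≤ γ1 * (y i) ^ (-(1:ℝ)/3) := by
            rw [hk]; have := hℓ i; linarith
          rw [hβγ] at this
          have := (mul_le_mul_iff_right₀ hγ1p).mp (by linarith [this] :
            γ1 * (β * (x i) ^ (-(1:ℝ)/3)) ≤ γ1 * (y i) ^ (-(1:ℝ)/3))
          exact this
        have := gmr_scale hβp (hxp i) (hyp i) h1
        rwa [hβ4] at this
      calc ∑ i ∈ I, (y i) ^ ((4:ℝ)/3)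
          ≤ ∑ i ∈ I, (1 + 1/(t:ℝ))^2 * (x i) ^ ((4:ℝ)/3) := Finset.sum_le_sum key
        _ = (1 + 1/(t:ℝ))^2 * ∑ i ∈ I, (x i) ^ ((4:ℝ)/3) := by
            rw [Finset.mul_sum]
        _ ≤ 2 * (1 + 1/(t:ℝ))^2 * ∑ i ∈ I, (x i) ^ ((4:ℝ)/3) := by
            have h2 := mul_nonneg (le_trans zero_le_one hfac) hSx
            linarith
    · -- c > 0
      have hlt : ∀ i ∈ I, i ≠ i₀ → x i < y i := by
        intro i hiI hne
        have hk := hkkt i hiI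
        rw [hi₀ i hne] at hk
        have hxpos : (0:ℝ) < (x i) ^ (-(1:ℝ)/3) := Real.rpow_pos_of_pos (hxp i) _
        have h1 : γ1 * (y i) ^ (-(1:ℝ)/3) < γ1 * (x i) ^ (-(1:ℝ)/3) := by
          have : γ0 * (x i) ^ (-(1:ℝ)/3) ≤ γ1 * (x i) ^ (-(1:ℝ)/3) :=
            mul_le_mul_of_nonneg_right hγ01 hxpos.le
          linarith [hk]
        have h2 : (y i) ^ (-(1:ℝ)/3) < (x i) ^ (-(1:ℝ)/3) := (mul_lt_mul_iff_right₀ hγ1p).mp h1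
        have := (Real.rpow_lt_rpow_iff_of_neg (hyp i) (hxp i) (by norm_num : -(1:ℝ)/3 < 0)).mp h2
        exact this
      -- there is a coordinate in I where y ≤ x, and it must be i₀
      have hex : ∃ j ∈ I, y j ≤ x j := by
        by_contra hcon
        push_neg at hcon
        have : ∑ i ∈ I, x i < ∑ i ∈ I, y i :=
          Finset.sum_lt_sum_of_nonempty hI fun i hi => hcon i hi
        linarith [hsum]
      obtain ⟨j, hjI, hjle⟩ := hex
      have hji₀ : j = i₀ := by
        by_contra hne
        exact absurd hjle (not_le.2 (hlt j hjI hne))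
      subst hji₀
      set J := I.erase j with hJ
      have hmem : ∀ i ∈ J, i ∈ I ∧ i ≠ j := fun i hi =>
        ⟨Finset.mem_of_mem_erase hi, Finset.ne_of_mem_erase hi⟩
      have hJle : ∀ i ∈ J, x i ≤ y i := fun i hi =>
        (hlt i (hmem i hi).1 (hmem i hi).2).le
      have hIx : ∑ i ∈ I, x i = x j + ∑ i ∈ J, x i := (Finset.add_sum_erase I x hjI).symm
      have hIy : ∑ i ∈ I, y i = y j + ∑ i ∈ J, y i := (Finset.add_sum_erase I y hjI).symm
      have hD : ∑ i ∈ J, (y i - x i) = x j - y j := by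
        rw [Finset.sum_sub_distrib]
        have := hsum
        rw [hIx, hIy] at this
        linarith
      have hDnn : 0 ≤ x j - y j := sub_nonneg.2 hjle
      have hstep1 : ∑ i ∈ J, (y i) ^ ((4:ℝ)/3)
          ≤ 2 * ∑ i ∈ J, (x i) ^ ((4:ℝ)/3) + 2 * (x j - y j) ^ ((4:ℝ)/3) := by
        have h1 : ∑ i ∈ J, (y i) ^ ((4:ℝ)/3)
            ≤ ∑ i ∈ J, (2 * (x i) ^ ((4:ℝ)/3) + 2 * (y i - x i) ^ ((4:ℝ)/3)) :=
          Finset.sum_le_sum fun i hi => gmr_star (hxp i).le (hJle i hi)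
        have h2 : ∑ i ∈ J, (y i - x i) ^ ((4:ℝ)/3)
            ≤ (∑ i ∈ J, (y i - x i)) ^ ((4:ℝ)/3) :=
          gmr_sum_rpow fun i hi => sub_nonneg.2 (hJle i hi)
        rw [hD] at h2
        rw [Finset.sum_add_distrib, ← Finset.mul_sum, ← Finset.mul_sum] at h1
        linarith
      have hstep2 : (y j) ^ ((4:ℝ)/3) + 2 * (x j - y j) ^ ((4:ℝ)/3)
          ≤ 2 * (x j) ^ ((4:ℝ)/3) := by
        have h1 : (y j) ^ ((4:ℝ)/3) + (x j - y j) ^ ((4:ℝ)/3)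
            ≤ (y j + (x j - y j)) ^ ((4:ℝ)/3) := gmr_superadd (hyp j).le hDnn
        rw [show y j + (x j - y j) = x j by ring] at h1
        have h2 : (x j - y j) ^ ((4:ℝ)/3) ≤ (x j) ^ ((4:ℝ)/3) :=
          Real.rpow_le_rpow hDnn (by linarith [(hyp j).le]) (by norm_num)
        linarith
      have hIy4 : ∑ i ∈ I, (y i) ^ ((4:ℝ)/3)
          = (y j) ^ ((4:ℝ)/3) + ∑ i ∈ J, (y i) ^ ((4:ℝ)/3) :=
        (Finset.add_sum_erase I (fun i => (y i) ^ ((4:ℝ)/3)) hjI).symm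
      have hIx4 : ∑ i ∈ I, (x i) ^ ((4:ℝ)/3)
          = (x j) ^ ((4:ℝ)/3) + ∑ i ∈ J, (x i) ^ ((4:ℝ)/3) :=
        (Finset.add_sum_erase I (fun i => (x i) ^ ((4:ℝ)/3)) hjI).symm
      calc ∑ i ∈ I, (y i) ^ ((4:ℝ)/3)
          = (y j) ^ ((4:ℝ)/3) + ∑ i ∈ J, (y i) ^ ((4:ℝ)/3) := hIy4
        _ ≤ 2 * ((x j) ^ ((4:ℝ)/3) + ∑ i ∈ J, (x i) ^ ((4:ℝ)/3)) := by linarith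
        _ = 2 * ∑ i ∈ I, (x i) ^ ((4:ℝ)/3) := by rw [hIx4]
        _ ≤ 2 * (1 + 1/(t:ℝ))^2 * ∑ i ∈ I, (x i) ^ ((4:ℝ)/3) := by
            have h := mul_le_mul_of_nonneg_right hfac hSx
            rw [one_mul] at h
            linarith
  · -- trivial constant comparison
    have h1t : 1/(t:ℝ) ≤ 1 := by
      rw [div_le_one htp]; exact_mod_cast ht
    have h4 : (1 + 1/(t:ℝ))^2 ≤ 4 := by
      have hb : (1:ℝ) + 1/(t:ℝ) ≤ 2 := by linarith
      have hnn : (0:ℝ) ≤ 1 + 1/(t:ℝ) := by positivity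
      calc (1 + 1/(t:ℝ))^2 ≤ 2^2 := pow_le_pow_left₀ hnn hb 2
        _ = 4 := by norm_num
    have h := mul_le_mul_of_nonneg_right h4 hSx
    linarith
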